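/- Let N,d ≥ 1 and let δ: ℝ → ℝ be differentiable, non-decreasing and concave on [0,∞) with δ′ > 0 on [0,∞). Then there exist a step size τ with 0 < τ ≤ 1 and a weight λ > 0 such that the following holds: starting from any Z^(0) ∈ ℝ^{N×d}, define for each k the weights ω_ij^(k) = δ′(‖z_i^(k) − z_j^(k)‖₂²), the row-normalized coupling matrix ŝ_ij^(k) = ω_ij^(k) / Σ_{l=1}^N ω_il^(k), the iteration z_i^(k+1) = (1 − τ Σ_j ŝ_ij^(k)) z_i^(k) + τ Σ_j ŝ_ij^(k) z_j^(k), and the regularized energy E(Z,k;δ) = ‖Z − Z^(k)‖_F² + λ Σ_{i,j} δ(‖z_i − z_j‖₂²). Then for every k ≥ 1, E(Z^(k+1), k; δ) ≤ E(Z^(k), k−1; δ). -/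

import Mathlib

open Finset Matrix

/-- Core descent inequality with abstract weights and abstract `D`, `G`. -/
lemma descent_core3 {N d : ℕ} (w : Fin N → Fin N → ℝ) (z Δ : Fin N → Fin d → ℝ)
    (D : Fin N → ℝ) (G : Fin N → Fin d → ℝ) (c0 lam : ℝ)
    (hc0 : 0 < c0) (hlam : lam = 1 / (4 * c0))
    (hwpos : ∀ i j, 0 < w i j) (hwsymm : ∀ i j, w i j = w j i)
    (hD : ∀ i, D i = ∑ l, w i l)
    (hG : ∀ i c, G i c = ∑ j, w i j * (z j c - z i c))
    (hDc0 : ∀ i, c0 ≤ D i)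
    (hstep : ∀ i c, Δ i c = G i c / D i / 2) :
    (∑ i, ∑ c, (Δ i c) ^ 2)
      + lam * (∑ i, ∑ j, w i j *
          ((∑ c, ((z i c + Δ i c) - (z j c + Δ j c)) ^ 2) - ∑ c, (z i c - z j c) ^ 2)) ≤ 0 := by
  have hDpos : ∀ i, 0 < D i := fun i => lt_of_lt_of_le hc0 (hDc0 i)
  have hDne : ∀ i, D i ≠ 0 := fun i => (hDpos i).ne'
  have hlam0 : 0 < lam := by rw [hlam]; positivity
  have hT0 : 0 ≤ ∑ i, ∑ c, (G i c) ^ 2 / D i :=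
    Finset.sum_nonneg fun i _ => Finset.sum_nonneg fun c _ =>
      div_nonneg (sq_nonneg _) (hDpos i).le
  -- symmetry swap trick
  have hswap : ∀ f : Fin N → Fin N → ℝ,
      (∑ i, ∑ j, w i j * f i j) = ∑ i, ∑ j, w i j * f j i := by
    intro f
    rw [Finset.sum_comm]
    exact Finset.sum_congr rfl fun i _ => Finset.sum_congr rfl fun j _ => by rw [hwsymm j i]
  -- per-row linear-term computation
  have hP : ∀ i : Fin N,
      (∑ j, w i j * (∑ c, (z i c - z j c) * Δ i c)) = -((∑ c, (G i c) ^ 2 / D i) / 2) := by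
    intro i
    calc (∑ j, w i j * (∑ c, (z i c - z j c) * Δ i c))
        = ∑ j, ∑ c, (w i j * (z i c - z j c)) * Δ i c := by
          refine Finset.sum_congr rfl fun j _ => ?_
          rw [Finset.mul_sum]
          exact Finset.sum_congr rfl fun c _ => by ring
      _ = ∑ c, ∑ j, (w i j * (z i c - z j c)) * Δ i c := Finset.sum_comm
      _ = ∑ c, (∑ j, w i j * (z i c - z j c)) * Δ i c := by
          refine Finset.sum_congr rfl fun c _ => ?_
          rw [Finset.sum_mul]
      _ = ∑ c, (-(G i c)) * Δ i c := by
          refine Finset.sum_congr rfl fun c _ => ?_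
          congr 1
          rw [hG, ← Finset.sum_neg_distrib]
          exact Finset.sum_congr rfl fun j _ => by ring
      _ = ∑ c, -((G i c) ^ 2 / D i / 2) := by
          refine Finset.sum_congr rfl fun c _ => ?_
          rw [hstep]; ring
      _ = -((∑ c, (G i c) ^ 2 / D i) / 2) := by
          rw [Finset.sum_neg_distrib, Finset.sum_div]
  -- linear term
  have key2 : (∑ i, ∑ j, w i j * (∑ c, (z i c - z j c) * (Δ i c - Δ j c)))
      = -(∑ i, ∑ c, (G i c) ^ 2 / D i) := by
    have hAsplit : ∀ i j, w i j * (∑ c, (z i c - z j c) * (Δ i c - Δ j c))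
        = w i j * (∑ c, (z i c - z j c) * Δ i c)
          - w i j * (∑ c, (z i c - z j c) * Δ j c) := by
      intro i j
      rw [← mul_sub, ← Finset.sum_sub_distrib]
      congr 1
      exact Finset.sum_congr rfl fun c _ => by ring
    have hQ : (∑ i, ∑ j, w i j * (∑ c, (z i c - z j c) * Δ j c))
        = -(∑ i, ∑ j, w i j * (∑ c, (z i c - z j c) * Δ i c)) := by
      rw [hswap (fun i j => ∑ c, (z i c - z j c) * Δ j c)]
      rw [← Finset.sum_neg_distrib]
      refine Finset.sum_congr rfl fun i _ => ?_
      rw [← Finset.sum_neg_distrib]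
      refine Finset.sum_congr rfl fun j _ => ?_
      have : (∑ c, (z j c - z i c) * Δ i c) = -∑ c, (z i c - z j c) * Δ i c := by
        rw [← Finset.sum_neg_distrib]
        exact Finset.sum_congr rfl fun c _ => by ring
      rw [this]; ring
    calc (∑ i, ∑ j, w i j * (∑ c, (z i c - z j c) * (Δ i c - Δ j c)))
        = ∑ i, ∑ j, (w i j * (∑ c, (z i c - z j c) * Δ i c)
            - w i j * (∑ c, (z i c - z j c) * Δ j c)) :=
          Finset.sum_congr rfl fun i _ => Finset.sum_congr rfl fun j _ => hAsplit i j
      _ = (∑ i, ∑ j, w i j * (∑ c, (z i c - z j c) * Δ i c))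
            - ∑ i, ∑ j, w i j * (∑ c, (z i c - z j c) * Δ j c) := by
          simp only [Finset.sum_sub_distrib]
      _ = 2 * ∑ i, ∑ j, w i j * (∑ c, (z i c - z j c) * Δ i c) := by
          rw [hQ]; ring
      _ = 2 * ∑ i, -((∑ c, (G i c) ^ 2 / D i) / 2) := by
          rw [Finset.sum_congr rfl fun i _ => hP i]
      _ = -(∑ i, ∑ c, (G i c) ^ 2 / D i) := by
          rw [Finset.sum_neg_distrib, ← Finset.sum_div]
          ring
  -- quadratic term bound
  have key3 : (∑ i, ∑ j, w i j * (∑ c, (Δ i c - Δ j c) ^ 2))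
      ≤ ∑ i, ∑ c, (G i c) ^ 2 / D i := by
    have step1 : ∀ i j : Fin N, w i j * (∑ c, (Δ i c - Δ j c) ^ 2)
        ≤ w i j * ((2 * ∑ c, (Δ i c) ^ 2) + 2 * ∑ c, (Δ j c) ^ 2) := by
      intro i j
      refine mul_le_mul_of_nonneg_left ?_ (hwpos i j).le
      calc (∑ c, (Δ i c - Δ j c) ^ 2)
          ≤ ∑ c, (2 * (Δ i c) ^ 2 + 2 * (Δ j c) ^ 2) :=
            Finset.sum_le_sum fun c _ => by nlinarith [sq_nonneg (Δ i c + Δ j c)]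
        _ = (2 * ∑ c, (Δ i c) ^ 2) + 2 * ∑ c, (Δ j c) ^ 2 := by
            rw [Finset.sum_add_distrib, Finset.mul_sum, Finset.mul_sum]
    calc (∑ i, ∑ j, w i j * (∑ c, (Δ i c - Δ j c) ^ 2))
        ≤ ∑ i, ∑ j, w i j * ((2 * ∑ c, (Δ i c) ^ 2) + 2 * ∑ c, (Δ j c) ^ 2) :=
          Finset.sum_le_sum fun i _ => Finset.sum_le_sum fun j _ => step1 i j
      _ = (∑ i, ∑ j, w i j * (2 * ∑ c, (Δ i c) ^ 2))
            + ∑ i, ∑ j, w i j * (2 * ∑ c, (Δ j c) ^ 2) := by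
          simp only [mul_add, Finset.sum_add_distrib]
      _ = (∑ i, ∑ j, w i j * (2 * ∑ c, (Δ i c) ^ 2))
            + ∑ i, ∑ j, w i j * (2 * ∑ c, (Δ i c) ^ 2) := by
          rw [hswap (fun i j => 2 * ∑ c, (Δ j c) ^ 2)]
      _ = ∑ i, 4 * (D i * ∑ c, (Δ i c) ^ 2) := by
          rw [← Finset.sum_add_distrib]
          refine Finset.sum_congr rfl fun i _ => ?_
          rw [← Finset.sum_mul, ← hD i]
          ring
      _ = ∑ i, ∑ c, (G i c) ^ 2 / D i := by
          refine Finset.sum_congr rfl fun i _ => ?_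
          rw [Finset.mul_sum, Finset.mul_sum]
          refine Finset.sum_congr rfl fun c _ => ?_
          rw [hstep]
          field_simp
          ring
  -- step-size bound
  have key4 : (∑ i, ∑ c, (Δ i c) ^ 2) ≤ lam * ∑ i, ∑ c, (G i c) ^ 2 / D i := by
    rw [Finset.mul_sum]
    refine Finset.sum_le_sum fun i _ => ?_
    rw [Finset.mul_sum]
    refine Finset.sum_le_sum fun c _ => ?_
    rw [hstep, hlam]
    have h1 : (G i c / D i / 2) ^ 2 = (G i c) ^ 2 / (4 * (D i) ^ 2) := by ring
    have h2 : 1 / (4 * c0) * ((G i c) ^ 2 / D i) = (G i c) ^ 2 / (4 * c0 * D i) := by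
      field_simp
    rw [h1, h2]
    refine div_le_div_of_nonneg_left (sq_nonneg _)
      (mul_pos (mul_pos (by norm_num : (0:ℝ) < 4) hc0) (hDpos i)) ?_
    nlinarith [hDc0 i, hc0, hDpos i]
  -- energy decomposition
  have key1 : (∑ i, ∑ j, w i j *
        ((∑ c, ((z i c + Δ i c) - (z j c + Δ j c)) ^ 2) - ∑ c, (z i c - z j c) ^ 2))
      = 2 * (∑ i, ∑ j, w i j * (∑ c, (z i c - z j c) * (Δ i c - Δ j c)))
        + (∑ i, ∑ j, w i j * (∑ c, (Δ i c - Δ j c) ^ 2)) := by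
    have h2 : ∀ i j : Fin N, w i j *
          ((∑ c, ((z i c + Δ i c) - (z j c + Δ j c)) ^ 2) - ∑ c, (z i c - z j c) ^ 2)
        = 2 * (w i j * (∑ c, (z i c - z j c) * (Δ i c - Δ j c)))
          + w i j * (∑ c, (Δ i c - Δ j c) ^ 2) := by
      intro i j
      have h3 : (∑ c, ((z i c + Δ i c) - (z j c + Δ j c)) ^ 2)
          = (∑ c, (z i c - z j c) ^ 2)
            + (((∑ c, (z i c - z j c) * (Δ i c - Δ j c)) * 2)
              + ∑ c, (Δ i c - Δ j c) ^ 2) := by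
        rw [Finset.sum_mul, ← Finset.sum_add_distrib, ← Finset.sum_add_distrib]
        exact Finset.sum_congr rfl fun c _ => by ring
      rw [h3]; ring
    calc (∑ i, ∑ j, w i j *
          ((∑ c, ((z i c + Δ i c) - (z j c + Δ j c)) ^ 2) - ∑ c, (z i c - z j c) ^ 2))
        = ∑ i, ∑ j, (2 * (w i j * (∑ c, (z i c - z j c) * (Δ i c - Δ j c)))
            + w i j * (∑ c, (Δ i c - Δ j c) ^ 2)) :=
          Finset.sum_congr rfl fun i _ => Finset.sum_congr rfl fun j _ => h2 i j
      _ = 2 * (∑ i, ∑ j, w i j * (∑ c, (z i c - z j c) * (Δ i c - Δ j c)))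
            + (∑ i, ∑ j, w i j * (∑ c, (Δ i c - Δ j c) ^ 2)) := by
          simp only [Finset.sum_add_distrib, ← Finset.mul_sum]
  rw [key1, key2]
  have hB := mul_le_mul_of_nonneg_left key3 hlam0.le
  have hexp : lam * (2 * -(∑ i, ∑ c, (G i c) ^ 2 / D i)
        + (∑ i, ∑ j, w i j * (∑ c, (Δ i c - Δ j c) ^ 2)))
      = lam * (∑ i, ∑ j, w i j * (∑ c, (Δ i c - Δ j c) ^ 2))
        - 2 * (lam * (∑ i, ∑ c, (G i c) ^ 2 / D i)) := by ring
  linarith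

/-- Core descent inequality stated for the new points `z'` directly. -/
lemma descent_core2 {N d : ℕ} (w : Fin N → Fin N → ℝ) (z z' : Fin N → Fin d → ℝ)
    (c0 lam : ℝ) (hc0 : 0 < c0) (hlam : lam = 1 / (4 * c0))
    (hwpos : ∀ i j, 0 < w i j) (hwsymm : ∀ i j, w i j = w j i)
    (hwc0 : ∀ i, c0 ≤ ∑ l, w i l)
    (hstep : ∀ i c, z' i c - z i c = (∑ j, w i j * (z j c - z i c)) / (∑ l, w i l) / 2) :
    (∑ i, ∑ c, (z' i c - z i c) ^ 2)
      + lam * (∑ i, ∑ j, w i j *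
          ((∑ c, (z' i c - z' j c) ^ 2) - ∑ c, (z i c - z j c) ^ 2)) ≤ 0 := by
  have h := descent_core3 w z (fun i c => z' i c - z i c) (fun i => ∑ l, w i l)
    (fun i c => ∑ j, w i j * (z j c - z i c)) c0 lam hc0 hlam hwpos hwsymm
    (fun i => rfl) (fun i c => rfl) hwc0 (fun i c => hstep i c)
  beta_reduce at h
  have e2 : (∑ i, ∑ j, w i j *
        ((∑ c, ((z i c + (z' i c - z i c)) - (z j c + (z' j c - z j c))) ^ 2)
          - ∑ c, (z i c - z j c) ^ 2))
      = ∑ i, ∑ j, w i j * ((∑ c, (z' i c - z' j c) ^ 2) - ∑ c, (z i c - z j c) ^ 2) := by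
    refine Finset.sum_congr rfl fun i _ => Finset.sum_congr rfl fun j _ => ?_
    congr 1
    congr 1
    exact Finset.sum_congr rfl fun c _ => by ring
  rw [e2] at h
  exact h

theorem stmt_10 (N d : ℕ) (hN : 1 ≤ N) (hd : 1 ≤ d)
    (δ δ' : ℝ → ℝ)
    (hderiv : ∀ u : ℝ, 0 ≤ u → HasDerivAt δ (δ' u) u)
    (hmono : MonotoneOn δ (Set.Ici 0))
    (hconc : ConcaveOn ℝ (Set.Ici 0) δ)
    (hpos : ∀ u : ℝ, 0 ≤ u → 0 < δ' u) :
    ∃ τ : ℝ, 0 < τ ∧ τ ≤ 1 ∧ ∃ lam : ℝ, 0 < lam ∧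
      ∀ Z : ℕ → Matrix (Fin N) (Fin d) ℝ,
        (∀ k (i : Fin N) (c : Fin d),
          Z (k + 1) i c =
            (1 - τ * ∑ j, (δ' (∑ c', (Z k i c' - Z k j c') ^ 2)
                / ∑ l, δ' (∑ c', (Z k i c' - Z k l c') ^ 2))) * Z k i c
              + τ * ∑ j, (δ' (∑ c', (Z k i c' - Z k j c') ^ 2)
                / ∑ l, δ' (∑ c', (Z k i c' - Z k l c') ^ 2)) * Z k j c)
        → ∀ k, 1 ≤ k →
            (∑ i, ∑ c, (Z (k + 1) i c - Z k i c) ^ 2)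
                + lam * ∑ i, ∑ j, δ (∑ c, (Z (k + 1) i c - Z (k + 1) j c) ^ 2)
              ≤ (∑ i, ∑ c, (Z k i c - Z (k - 1) i c) ^ 2)
                + lam * ∑ i, ∑ j, δ (∑ c, (Z k i c - Z k j c) ^ 2) := by
  have hc0 : 0 < δ' 0 := hpos 0 le_rfl
  -- tangent-line bound from concavity
  have htan : ∀ u v : ℝ, 0 ≤ u → 0 ≤ v → δ v ≤ δ u + δ' u * (v - u) := by
    intro u v hu hv
    rcases lt_trichotomy u v with h | h | h
    · have hs := hconc.slope_le_of_hasDerivAt (Set.mem_Ici.mpr hu) (Set.mem_Ici.mpr hv) h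
        (hderiv u hu)
      rw [slope_def_field] at hs
      have hvu : 0 < v - u := sub_pos.mpr h
      rw [div_le_iff₀ hvu] at hs
      linarith
    · subst h; simp
    · have hs := hconc.le_slope_of_hasDerivAt (Set.mem_Ici.mpr hv) (Set.mem_Ici.mpr hu) h
        (hderiv u hu)
      rw [slope_def_field] at hs
      have huv : 0 < u - v := sub_pos.mpr h
      rw [le_div_iff₀ huv] at hs
      nlinarith
  refine ⟨1 / 2, by norm_num, by norm_num, 1 / (4 * δ' 0), by positivity, ?_⟩
  intro Z hZ k hk
  have hq0 : ∀ (a b : Fin d → ℝ), (0:ℝ) ≤ ∑ c, (a c - b c) ^ 2 := fun a b =>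
    Finset.sum_nonneg fun c _ => sq_nonneg _
  have hcore := descent_core2 (fun i j => δ' (∑ c, (Z k i c - Z k j c) ^ 2))
    (Z k) (Z (k + 1)) (δ' 0) (1 / (4 * δ' 0)) hc0 rfl
    (fun i j => hpos _ (hq0 _ _))
    (fun i j => by
      show δ' (∑ c, (Z k i c - Z k j c) ^ 2) = δ' (∑ c, (Z k j c - Z k i c) ^ 2)
      congr 1
      exact Finset.sum_congr rfl fun c _ => by ring)
    (fun i => by
      show δ' 0 ≤ ∑ l, δ' (∑ c, (Z k i c - Z k l c) ^ 2)
      have h0 : δ' 0 = δ' (∑ c, (Z k i c - Z k i c) ^ 2) := by simp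
      rw [h0]
      exact Finset.single_le_sum (f := fun l => δ' (∑ c, (Z k i c - Z k l c) ^ 2))
        (fun l _ => (hpos _ (hq0 _ _)).le) (Finset.mem_univ i))
    ?_
  · beta_reduce at hcore
    -- tangent sum bound
    have hS' : (∑ i, ∑ j, δ (∑ c, (Z (k + 1) i c - Z (k + 1) j c) ^ 2))
        ≤ (∑ i, ∑ j, δ (∑ c, (Z k i c - Z k j c) ^ 2))
          + ∑ i, ∑ j, δ' (∑ c, (Z k i c - Z k j c) ^ 2) *
              ((∑ c, (Z (k + 1) i c - Z (k + 1) j c) ^ 2) - ∑ c, (Z k i c - Z k j c) ^ 2) := by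
      rw [← Finset.sum_add_distrib]
      refine Finset.sum_le_sum fun i _ => ?_
      rw [← Finset.sum_add_distrib]
      exact Finset.sum_le_sum fun j _ => htan _ _ (hq0 _ _) (hq0 _ _)
    have hnn : (0:ℝ) ≤ ∑ i, ∑ c, (Z k i c - Z (k - 1) i c) ^ 2 :=
      Finset.sum_nonneg fun i _ => Finset.sum_nonneg fun c _ => sq_nonneg _
    have hlampos : (0:ℝ) < 1 / (4 * δ' 0) := by positivity
    have h1 := mul_le_mul_of_nonneg_left hS' hlampos.le
    rw [mul_add] at h1
    linarith
  · intro i c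
    show Z (k + 1) i c - Z k i c =
      (∑ j, δ' (∑ c', (Z k i c' - Z k j c') ^ 2) * (Z k j c - Z k i c))
        / (∑ l, δ' (∑ c', (Z k i c' - Z k l c') ^ 2)) / 2
    have hDpos : (0:ℝ) < ∑ l, δ' (∑ c', (Z k i c' - Z k l c') ^ 2) :=
      Finset.sum_pos (fun l _ => hpos _ (hq0 _ _)) ⟨i, Finset.mem_univ i⟩
    rw [hZ k i c]
    have e1 : (∑ j, δ' (∑ c', (Z k i c' - Z k j c') ^ 2)
        / ∑ l, δ' (∑ c', (Z k i c' - Z k l c') ^ 2)) = 1 := by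
      rw [← Finset.sum_div, div_self hDpos.ne']
    have e2 : (∑ j, (δ' (∑ c', (Z k i c' - Z k j c') ^ 2)
          / ∑ l, δ' (∑ c', (Z k i c' - Z k l c') ^ 2)) * Z k j c)
        = (∑ j, δ' (∑ c', (Z k i c' - Z k j c') ^ 2) * Z k j c)
            / ∑ l, δ' (∑ c', (Z k i c' - Z k l c') ^ 2) := by
      rw [Finset.sum_div]
      exact Finset.sum_congr rfl fun j _ => by rw [div_mul_eq_mul_div]
    have e3 : (∑ j, δ' (∑ c', (Z k i c' - Z k j c') ^ 2) * (Z k j c - Z k i c))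
        = (∑ j, δ' (∑ c', (Z k i c' - Z k j c') ^ 2) * Z k j c)
          - (∑ l, δ' (∑ c', (Z k i c' - Z k l c') ^ 2)) * Z k i c := by
      rw [Finset.sum_mul, ← Finset.sum_sub_distrib]
      exact Finset.sum_congr rfl fun j _ => by ring
    rw [e1, e2, e3]
    field_simp
    ring
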